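/- Let K be the fractal k-cube of order n with digit set D and let α ∈ A_k. Let pr'_α denote the orthogonal projection of ℝ^k onto E'_α = span{e_i : α_i ≠ 0}. Let d̄_0 ∈ pr'_α(D), let s̄_0 = d̄_0/(n−1), and let D̄_0 = (pr'_α)^{-1}(d̄_0) ∩ D. Then the section K ∩ (pr'_α)^{-1}(s̄_0) of K is exactly the fractal k-cube with digit set D̄_0, i.e., it equals the unique nonempty compact set X ⊆ ℝ^k with nX = X + D̄_0. -/
import Mathlib


open Set Pointwise MeasureTheory

noncomputable section

/-- Points of `ℝ^k`. -/
abbrev Pt (k : ℕ) := Fin k → ℝ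

/-- A vector with all coordinates in `{0, 1, …, n−1}`. -/
def IsDigit (n : ℕ) {k : ℕ} (d : Pt k) : Prop :=
  ∀ i, ∃ m : ℕ, m < n ∧ d i = (m : ℝ)

/-- A digit set: a nonempty subset of `{0, 1, …, n−1}^k`. -/
def IsDigitSet (n : ℕ) {k : ℕ} (D : Set (Pt k)) : Prop :=
  D.Nonempty ∧ ∀ d ∈ D, IsDigit n d

/-- `K` is the fractal `k`-cube of order `n` with digit set `D`:
a nonempty compact set with `nK = K + D`. -/
def IsFractalCube (n : ℕ) {k : ℕ} (D K : Set (Pt k)) : Prop :=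
  K.Nonempty ∧ IsCompact K ∧ (n : ℝ) • K = K + D

/-- `α ∈ A_k = {−1, 0, 1}^k`. -/
def IsAk {k : ℕ} (α : Pt k) : Prop :=
  ∀ i, α i = -1 ∨ α i = 0 ∨ α i = 1

/-- The unit cube `P = [0,1]^k`. -/
def unitCube (k : ℕ) : Set (Pt k) := {x | ∀ i, 0 ≤ x i ∧ x i ≤ 1}

/-- The face `P_α = P ∩ (P + α)`. -/
def face {k : ℕ} (α : Pt k) : Set (Pt k) :=
  unitCube k ∩ ((fun x => x + α) '' unitCube k)

/-- `α ⊑ β` : `β i = α i` whenever `α i ≠ 0`. -/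
def SqLe {k : ℕ} (α β : Pt k) : Prop := ∀ i, α i ≠ 0 → β i = α i

/-- `α ⊏ β`. -/
def SqLt {k : ℕ} (α β : Pt k) : Prop := SqLe α β ∧ α ≠ β

/-- `F_α = K₁ ∩ (K₂ + α)`. -/
def interF {k : ℕ} (K1 K2 : Set (Pt k)) (α : Pt k) : Set (Pt k) :=
  K1 ∩ ((fun x => x + α) '' K2)

/-- `G_{αβ} = D₁ ∩ (D₂ + nα − β)`. -/
def Gab (n : ℕ) {k : ℕ} (D1 D2 : Set (Pt k)) (α β : Pt k) : Set (Pt k) :=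
  D1 ∩ ((fun x => x + ((n : ℝ) • α - β)) '' D2)

/-- `G_α = G_{αα} = D₁ ∩ (D₂ + (n−1)α)`. -/
def Ga (n : ℕ) {k : ℕ} (D1 D2 : Set (Pt k)) (α : Pt k) : Set (Pt k) :=
  Gab n D1 D2 α α

/-- `β ≻ α` : there is a chain `α = α₀ ⊏ α₁ ⊏ … ⊏ α_p = β` in `A_k` (`p ≥ 1`)
with all `F_{α_j}` nonempty and all `G_{α_{j−1} α_j}` nonempty. -/
def GSucc (n : ℕ) {k : ℕ} (D1 D2 K1 K2 : Set (Pt k)) (β α : Pt k) : Prop :=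
  ∃ p : ℕ, 0 < p ∧ ∃ c : ℕ → Pt k, c 0 = α ∧ c p = β ∧
    (∀ j ≤ p, IsAk (c j)) ∧
    (∀ j < p, SqLt (c j) (c (j + 1))) ∧
    (∀ j ≤ p, (interF K1 K2 (c j)).Nonempty) ∧
    (∀ j < p, (Gab n D1 D2 (c j) (c (j + 1))).Nonempty)

/-- `β ≽ α`. -/
def GSuccEq (n : ℕ) {k : ℕ} (D1 D2 K1 K2 : Set (Pt k)) (β α : Pt k) : Prop :=
  GSucc n D1 D2 K1 K2 β α ∨ β = α

/-- The map `S_d(x) = (x + d)/n`. -/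
def Sdig (n : ℕ) {k : ℕ} (d : Pt k) : Pt k → Pt k :=
  fun x => (n : ℝ)⁻¹ • (x + d)

/-- The `p`-th refinement digit set
`D^(p) = { n^{p−1} d₁ + n^{p−2} d₂ + … + d_p : (d₁, …, d_p) ∈ D^p }`. -/
def refineD (n p : ℕ) {k : ℕ} (D : Set (Pt k)) : Set (Pt k) :=
  {x | ∃ f : Fin p → Pt k, (∀ j, f j ∈ D) ∧
    x = ∑ j : Fin p, ((n : ℝ) ^ (p - 1 - (j : ℕ))) • f j}

/-- A maximal vertex of the structure graph: `F_β ≠ ∅` and no `γ ≻ β`. -/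
def IsMaxVertex (n : ℕ) {k : ℕ} (D1 D2 K1 K2 : Set (Pt k)) (β : Pt k) : Prop :=
  IsAk β ∧ (interF K1 K2 β).Nonempty ∧ ¬∃ γ, IsAk γ ∧ GSucc n D1 D2 K1 K2 γ β

/-- The product `∏ #G_{α_j α_{j+1}}` over consecutive pairs of a chain. -/
def chainProd (n : ℕ) {k : ℕ} (D1 D2 : Set (Pt k)) : List (Pt k) → ℕ
  | [] => 1
  | [_] => 1
  | a :: b :: rest => (Gab n D1 D2 a b).ncard * chainProd n D1 D2 (b :: rest)

/-- A chain `α = α₁ ⊏ α₂ ⊏ … ⊏ α_p = β` inside `Γ_α` ending at a maximal vertex `β`. -/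
def IsMaxChainFrom (n : ℕ) {k : ℕ} (D1 D2 K1 K2 : Set (Pt k)) (α : Pt k)
    (c : List (Pt k)) : Prop :=
  c ≠ [] ∧ c.head? = some α ∧ List.Chain' SqLt c ∧
  (∀ β ∈ c, IsAk β ∧ GSuccEq n D1 D2 K1 K2 β α) ∧
  ∃ β, c.getLast? = some β ∧ IsMaxVertex n D1 D2 K1 K2 β


/-- the section `K ∩ (pr'_α)⁻¹(s̄₀)`, with `s̄₀ = d̄₀/(n−1)`,
is the fractal cube with digit set `D̄₀ = (pr'_α)⁻¹(d̄₀) ∩ D`. -/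
private lemma master {k n : ℕ} (hn : 2 ≤ n) {X Y : Set (Pt k)}
    (hYc : IsClosed Y) (hYne : Y.Nonempty)
    (hbound : ∃ C, ∀ a ∈ X, ∀ y ∈ Y, dist a y ≤ C)
    (hstep : ∀ a ∈ X, ∃ a' ∈ X, ∃ d : Pt k,
      (n : ℝ) • a = a' + d ∧ ∀ y ∈ Y, (n : ℝ)⁻¹ • (y + d) ∈ Y) :
    X ⊆ Y := by
  obtain ⟨C, hC⟩ := hbound
  have hn2 : (2:ℝ) ≤ (n:ℝ) := by exact_mod_cast hn
  have hnpos : (0:ℝ) < n := by linarith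
  have hinv0 : (0:ℝ) ≤ (n:ℝ)⁻¹ := by positivity
  have hinv1 : (n:ℝ)⁻¹ < 1 := by
    rw [inv_lt_one_iff₀]; right; linarith
  have key : ∀ m : ℕ, ∀ a ∈ X, ∃ y ∈ Y, dist a y ≤ C * ((n:ℝ)⁻¹)^m := by
    intro m
    induction m with
    | zero =>
      intro a ha
      obtain ⟨y0, hy0⟩ := hYne
      exact ⟨y0, hy0, by simpa using hC a ha y0 hy0⟩
    | succ m ih =>
      intro a ha
      obtain ⟨a', ha', d, had, hdY⟩ := hstep a ha
      obtain ⟨y, hy, hdist⟩ := ih a' ha'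
      refine ⟨(n:ℝ)⁻¹ • (y + d), hdY y hy, ?_⟩
      have haeq : a = (n:ℝ)⁻¹ • (a' + d) := by
        rw [← had, inv_smul_smul₀ (ne_of_gt hnpos)]
      rw [haeq, dist_smul₀, dist_add_right, Real.norm_eq_abs, abs_of_nonneg hinv0]
      calc (n:ℝ)⁻¹ * dist a' y ≤ (n:ℝ)⁻¹ * (C * ((n:ℝ)⁻¹)^m) :=
            mul_le_mul_of_nonneg_left hdist hinv0
        _ = C * ((n:ℝ)⁻¹)^(m+1) := by ring
  intro x hx
  rw [← hYc.closure_eq]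
  rw [Metric.mem_closure_iff]
  intro ε hε
  have htend : Filter.Tendsto (fun m : ℕ => C * ((n:ℝ)⁻¹)^m) Filter.atTop (nhds 0) := by
    simpa using (tendsto_pow_atTop_nhds_zero_of_lt_one hinv0 hinv1).const_mul C
  obtain ⟨m, hm⟩ := (htend.eventually (gt_mem_nhds hε)).exists
  obtain ⟨y, hy, hdy⟩ := key m x hx
  exact ⟨y, hy, lt_of_le_of_lt hdy hm⟩

private lemma attractor_subset {k n : ℕ} (hn : 2 ≤ n) {E X Y : Set (Pt k)}
    (hXb : Bornology.IsBounded X) (hYb : Bornology.IsBounded Y)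
    (hYc : IsClosed Y) (hYne : Y.Nonempty)
    (hX : (n : ℝ) • X = X + E) (hY : (n : ℝ) • Y = Y + E) :
    X ⊆ Y := by
  have hnne : ((n:ℝ)) ≠ 0 := by
    have : (2:ℝ) ≤ (n:ℝ) := by exact_mod_cast hn
    linarith
  apply master hn hYc hYne
  · obtain ⟨C, hC⟩ := Metric.isBounded_iff.mp (hXb.union hYb)
    exact ⟨C, fun a ha y hy => hC (Or.inl ha) (Or.inr hy)⟩
  · intro a ha
    have h1 : (n:ℝ) • a ∈ X + E := by
      rw [← hX]; exact smul_mem_smul_set ha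
    obtain ⟨a', ha', d, hd, hsum⟩ := Set.mem_add.mp h1
    refine ⟨a', ha', d, hsum.symm, fun y hy => ?_⟩
    have h2 : y + d ∈ (n:ℝ) • Y := by
      rw [hY]; exact Set.add_mem_add hy hd
    obtain ⟨z, hz, hzeq⟩ := h2
    rw [← hzeq, inv_smul_smul₀ hnne]; exact hz

theorem section_is_fractalCube {k n : ℕ} (hk : 1 ≤ k) (hn : 2 ≤ n)
    (D K : Set (Pt k)) (hD : IsDigitSet n D) (hK : IsFractalCube n D K)
    (α : Pt k) (hα : IsAk α)
    (pr : Pt k → Pt k) (hpr : pr = fun x i => if α i = 0 then 0 else x i)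
    (d0 : Pt k) (hd0 : d0 ∈ pr '' D) :
    IsFractalCube n (pr ⁻¹' {d0} ∩ D) (K ∩ pr ⁻¹' {((n : ℝ) - 1)⁻¹ • d0}) ∧
    ∀ X : Set (Pt k), IsFractalCube n (pr ⁻¹' {d0} ∩ D) X →
      X = K ∩ pr ⁻¹' {((n : ℝ) - 1)⁻¹ • d0} := by
  subst hpr
  obtain ⟨hDne, hDdig⟩ := hD
  obtain ⟨hKne, hKc, hKD⟩ := hK
  obtain ⟨dbar, hdbarD, hdbar⟩ := hd0
  set pr : Pt k → Pt k := fun x i => if α i = 0 then 0 else x i with hprdef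
  set s0 : Pt k := ((n : ℝ) - 1)⁻¹ • d0 with hs0def
  have hn2 : (2:ℝ) ≤ (n:ℝ) := by exact_mod_cast hn
  have hnne : ((n:ℝ)) ≠ 0 := by linarith
  have hn1ne : ((n:ℝ) - 1) ≠ 0 := by linarith
  -- coordinates of d0
  have hd0co : ∀ i, d0 i = if α i = 0 then 0 else dbar i := by
    intro i; rw [← hdbar]
  have hs0co : ∀ i, s0 i = ((n:ℝ) - 1)⁻¹ * d0 i := by
    intro i; rw [hs0def]; simp
  -- digit bounds
  have hdig : ∀ d ∈ D, ∀ i, 0 ≤ d i ∧ d i ≤ (n:ℝ) - 1 := by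
    intro d hd i
    obtain ⟨m, hmn, hdm⟩ := hDdig d hd i
    have h1 : (m:ℝ) + 1 ≤ (n:ℝ) := by exact_mod_cast hmn
    have h2 : (0:ℝ) ≤ (m:ℝ) := Nat.cast_nonneg m
    constructor <;> rw [hdm] <;> linarith
  -- K is inside the unit cube
  have hKcube : ∀ x ∈ K, ∀ i, 0 ≤ x i ∧ x i ≤ 1 := by
    intro x hx i
    constructor
    · obtain ⟨w, hw, hwmin⟩ := hKc.exists_isMinOn hKne (continuous_apply i).continuousOn
      have h1 : (n:ℝ) • w ∈ K + D := by rw [← hKD]; exact smul_mem_smul_set hw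
      obtain ⟨y, hy, d, hd, hsum⟩ := Set.mem_add.mp h1
      have hyi : w i ≤ y i := isMinOn_iff.mp hwmin y hy
      have hdi : 0 ≤ d i := (hdig d hd i).1
      have heq : y i + d i = (n:ℝ) * w i := by
        have := congrFun hsum i; simpa using this
      have hwx : w i ≤ x i := isMinOn_iff.mp hwmin x hx
      nlinarith
    · obtain ⟨w, hw, hwmax⟩ := hKc.exists_isMaxOn hKne (continuous_apply i).continuousOn
      have h1 : (n:ℝ) • w ∈ K + D := by rw [← hKD]; exact smul_mem_smul_set hw
      obtain ⟨y, hy, d, hd, hsum⟩ := Set.mem_add.mp h1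
      have hyi : y i ≤ w i := isMaxOn_iff.mp hwmax y hy
      have hdi : d i ≤ (n:ℝ) - 1 := (hdig d hd i).2
      have heq : y i + d i = (n:ℝ) * w i := by
        have := congrFun hsum i; simpa using this
      have hwx : x i ≤ w i := isMaxOn_iff.mp hwmax x hx
      nlinarith
  -- key coordinate lemma
  have key : ∀ x ∈ K, pr x = s0 → ∀ y ∈ K, ∀ d ∈ D, y + d = (n:ℝ) • x →
      pr d = d0 ∧ pr y = s0 := by
    intro x hx hprx y hy d hd hsum
    have hco : ∀ i, α i ≠ 0 → d i = d0 i ∧ y i = s0 i := by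
      intro i hi
      obtain ⟨m, hmn, hdm⟩ := hDdig d hd i
      obtain ⟨m0, hm0n, hdbarm⟩ := hDdig dbar hdbarD i
      have hd0i : d0 i = (m0:ℝ) := by rw [hd0co i, if_neg hi, hdbarm]
      have hxi : x i = s0 i := by
        have := congrFun hprx i
        simpa [hprdef, if_neg hi] using this
      have heqi : y i + d i = (n:ℝ) * x i := by simpa using congrFun hsum i
      have hprod : ((n:ℝ) - 1) * s0 i = (m0:ℝ) := by
        rw [hs0co i, hd0i]; field_simp
      have hyi0 := (hKcube y hy i).1
      have hyi1 := (hKcube y hy i).2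
      have hmR : (m:ℝ) + 1 ≤ (n:ℝ) := by exact_mod_cast hmn
      have hm0R : (m0:ℝ) + 1 ≤ (n:ℝ) := by exact_mod_cast hm0n
      have hm0nn : (0:ℝ) ≤ (m0:ℝ) := Nat.cast_nonneg m0
      have hmnn : (0:ℝ) ≤ (m:ℝ) := Nat.cast_nonneg m
      have hS0 : 0 ≤ s0 i := by nlinarith
      have hS1 : s0 i ≤ 1 := by nlinarith
      have hlin : y i + (m:ℝ) = s0 i + (m0:ℝ) := by
        rw [hdm] at heqi; rw [hxi] at heqi; linarith
      have hmm0 : m = m0 := by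
        rcases lt_trichotomy m m0 with h | h | h
        · exfalso
          have hcast : (m:ℝ) + 1 ≤ (m0:ℝ) := by exact_mod_cast h
          have hSz : s0 i = 0 := by linarith
          rw [hSz, mul_zero] at hprod
          linarith
        · exact h
        · exfalso
          have hcast : (m0:ℝ) + 1 ≤ (m:ℝ) := by exact_mod_cast h
          have hSz : s0 i = 1 := by linarith
          rw [hSz, mul_one] at hprod
          linarith
      constructor
      · rw [hdm, hd0i, hmm0]
      · have : (m:ℝ) = (m0:ℝ) := by exact_mod_cast hmm0
        linarith
    refine ⟨funext fun i => ?_, funext fun i => ?_⟩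
    · by_cases hi : α i = 0
      · simp [hprdef, hi, hd0co i]
      · simpa [hprdef, hi] using (hco i hi).1
    · by_cases hi : α i = 0
      · simp [hprdef, hi, hs0co i, hd0co i]
      · simpa [hprdef, hi] using (hco i hi).2
  -- the invariance equation n•s0 = s0 + d0
  have hns0 : (n:ℝ) • s0 = s0 + d0 := by
    funext i
    have := hs0co i
    simp only [Pi.smul_apply, Pi.add_apply, smul_eq_mul, this]
    field_simp
    ring
  have hprz : ∀ z y d : Pt k, (n:ℝ) • z = y + d → pr y = s0 → pr d = d0 → pr z = s0 := by
    intro z y d hzeq hpry hprd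
    have h1 : (n:ℝ) • pr z = pr ((n:ℝ) • z) := by
      funext i; by_cases hi : α i = 0 <;> simp [hprdef, hi]
    have h2 : pr (y + d) = pr y + pr d := by
      funext i; by_cases hi : α i = 0 <;> simp [hprdef, hi]
    have h3 : (n:ℝ) • pr z = (n:ℝ) • s0 := by
      rw [h1, hzeq, h2, hpry, hprd, hns0]
    exact smul_right_injective (Pt k) hnne h3
  -- invariance
  have hinv : (n:ℝ) • (K ∩ pr ⁻¹' {s0}) = (K ∩ pr ⁻¹' {s0}) + (pr ⁻¹' {d0} ∩ D) := by
    apply Set.Subset.antisymm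
    · rintro p hp
      obtain ⟨x, ⟨hxK, hxpr⟩, rfl⟩ := hp
      have hxpr' : pr x = s0 := hxpr
      have h1 : (n:ℝ) • x ∈ K + D := by rw [← hKD]; exact smul_mem_smul_set hxK
      obtain ⟨y, hy, d, hd, hsum⟩ := Set.mem_add.mp h1
      obtain ⟨hprd, hpry⟩ := key x hxK hxpr' y hy d hd hsum
      exact Set.mem_add.mpr ⟨y, ⟨hy, hpry⟩, d, ⟨hprd, hd⟩, hsum⟩
    · rintro p hp
      obtain ⟨y, ⟨hyK, hypr⟩, d, ⟨hdpr, hdD⟩, rfl⟩ := Set.mem_add.mp hp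
      have h1 : y + d ∈ (n:ℝ) • K := by rw [hKD]; exact Set.add_mem_add hyK hdD
      obtain ⟨z, hz, hzeq⟩ := h1
      exact ⟨z, ⟨hz, hprz z y d (by simpa using hzeq) hypr hdpr⟩, hzeq⟩
  -- continuity of pr, closedness of the fiber
  have hprcont : Continuous pr := by
    refine continuous_pi fun i => ?_
    by_cases hi : α i = 0
    · simp only [hprdef, if_pos hi]; exact continuous_const
    · simp only [hprdef]; simp only [if_neg hi]; exact continuous_apply i
  have hfibc : IsClosed (pr ⁻¹' {s0}) := isClosed_singleton.preimage hprcont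
  have hK0c : IsCompact (K ∩ pr ⁻¹' {s0}) := hKc.inter_right hfibc
  -- the fixed point
  set fix : Pt k := ((n:ℝ) - 1)⁻¹ • dbar with hfixdef
  have hfixeq : (n:ℝ) • fix = fix + dbar := by
    funext i
    simp only [hfixdef, Pi.smul_apply, Pi.add_apply, smul_eq_mul]
    field_simp
    ring
  have hfixK : fix ∈ K := by
    have hsub : {fix} ⊆ K := by
      apply master hn hKc.isClosed hKne
      · obtain ⟨C, hC⟩ := Metric.isBounded_iff.mp
          ((Bornology.isBounded_singleton (x := fix)).union hKc.isBounded)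
        exact ⟨C, fun a ha y hy => hC (Or.inl ha) (Or.inr hy)⟩
      · rintro a rfl
        refine ⟨fix, rfl, dbar, hfixeq, fun y hy => ?_⟩
        have h1 : y + dbar ∈ (n:ℝ) • K := by rw [hKD]; exact Set.add_mem_add hy hdbarD
        obtain ⟨z, hz, hzeq⟩ := h1
        rw [← hzeq, inv_smul_smul₀ hnne]; exact hz
    exact hsub rfl
  have hfixpr : pr fix = s0 := by
    funext i
    by_cases hi : α i = 0
    · simp [hprdef, hi, hs0co i, hd0co i]
    · simp [hprdef, hi, hfixdef, hs0co i, hd0co i]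
  have hK0ne : (K ∩ pr ⁻¹' {s0}).Nonempty := ⟨fix, hfixK, hfixpr⟩
  refine ⟨⟨hK0ne, hK0c, hinv⟩, ?_⟩
  rintro X ⟨hXne, hXc, hXinv⟩
  apply Set.Subset.antisymm
  · exact attractor_subset hn hXc.isBounded hK0c.isBounded hK0c.isClosed hK0ne hXinv hinv
  · exact attractor_subset hn hK0c.isBounded hXc.isBounded hXc.isClosed hXne hinv hXinv
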